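/- Let n ≥ 1. Let t : 2^[n] → ℂ satisfy ∑_{J ⊆ [n]} t_J = 1, and let a^{(0)}, a^{(1)} ∈ ℂⁿ; set b_i = a_i^{(1)} − a_i^{(0)}. Define the moments of the complete hidden subset model by μ_I = ∑_{J ⊆ [n]} t_J · ∏_{i ∈ I}(a_i^{(1)} if i ∈ J else a_i^{(0)}), and define the moments of the mixing table by μ^{(t)}_I = ∑_{J ⊇ I} t_J. Let k and k^{(t)} denote the respective cumulants (via k_I = ∑_{π ∈ Π(I)} (−1)^{|π|−1}(|π|−1)! ∏_{B ∈ π} μ_B). Then k_{{i}} = a_i^{(0)} + b_i · k^{(t)}_{{i}} for each i ∈ [n], and k_I = k^{(t)}_I · ∏_{i ∈ I} b_i for every I ⊆ [n] with |I| ≥ 2. -/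

import Mathlib

open Finset

/-- The cumulants of a table `μ` indexed by subsets of `[n]`. -/
noncomputable def cumulant {n : ℕ} (μ : Finset (Fin n) → ℂ) (I : Finset (Fin n)) : ℂ :=
  ∑ π : Finpartition I,
    (-1 : ℂ) ^ (π.parts.card - 1) * (Nat.factorial (π.parts.card - 1) : ℂ) *
      ∏ B ∈ π.parts, μ B

namespace HiddenSubsetAux
variable {ι : Type*} [DecidableEq ι]


lemma avoid_parts_of_mem {I C : Finset ι} (π : Finpartition I) (hC : C ∈ π.parts) :
    (π.avoid C).parts = π.parts.erase C := by
  ext B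
  rw [Finpartition.mem_avoid, mem_erase]
  constructor
  · rintro ⟨d, hd, hdC, rfl⟩
    have hne : d ≠ C := by rintro rfl; exact hdC le_rfl
    have hdis : Disjoint d C := π.disjoint hd hC hne
    rw [sdiff_eq_self_of_disjoint hdis]
    exact ⟨hne, hd⟩
  · rintro ⟨hne, hB⟩
    have hdis : Disjoint B C := π.disjoint hB hC hne
    refine ⟨B, hB, fun hle => π.ne_bot hB (hdis.eq_bot_of_le hle), sdiff_eq_self_of_disjoint hdis⟩

lemma extend_avoid {I C : Finset ι} (π : Finpartition I) (hC : C ∈ π.parts)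
    (hb : C ≠ ⊥) (hab : Disjoint (I \ C) C) (hc : (I \ C) ⊔ C = I) :
    (π.avoid C).extend hb hab hc = π := by
  ext1
  rw [Finpartition.extend_parts, avoid_parts_of_mem π hC, insert_erase hC]

lemma not_mem_parts_self {I C : Finset ι} (σ : Finpartition (I \ C)) (hC : C.Nonempty) :
    C ∉ σ.parts := by
  intro h
  have h1 := σ.le h
  have h2 : Disjoint C C := (disjoint_sdiff.symm).mono_left h1
  simp [disjoint_self] at h2
  exact hC.ne_empty h2

lemma avoid_extend {I C : Finset ι} (σ : Finpartition (I \ C)) (hCne : C.Nonempty)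
    (hb : C ≠ ⊥) (hab : Disjoint (I \ C) C) (hc : (I \ C) ⊔ C = I) :
    (σ.extend hb hab hc).avoid C = σ := by
  ext1
  rw [avoid_parts_of_mem _ (by rw [Finpartition.extend_parts]; exact mem_insert_self _ _),
    Finpartition.extend_parts, erase_insert (not_mem_parts_self σ hCne)]

noncomputable def glue (I C : Finset ι) (σ : Finpartition (I \ C)) : Finpartition I :=
  if h : C.Nonempty ∧ C ⊆ I then
    σ.extend (by simpa [← Finset.nonempty_iff_ne_empty] using h.1) sdiff_disjoint
      (sdiff_sup_cancel h.2)
  else ⊤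

lemma glue_parts {I C : Finset ι} (σ : Finpartition (I \ C)) (h1 : C.Nonempty) (h2 : C ⊆ I) :
    (glue I C σ).parts = insert C σ.parts := by
  rw [glue, dif_pos ⟨h1, h2⟩, Finpartition.extend_parts]

lemma split {I : Finset ι} (F : Finpartition I → Finset ι → ℂ) :
    (∑ π : Finpartition I, ∑ C ∈ π.parts, F π C)
    = ∑ C ∈ I.powerset.filter Finset.Nonempty, ∑ σ : Finpartition (I \ C), F (glue I C σ) C := by
  have L : (∑ π : Finpartition I, ∑ C ∈ π.parts, F π C)
      = ∑ x ∈ (univ : Finset (Finpartition I)).sigma (fun π => π.parts), F x.1 x.2 := by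
    rw [Finset.sum_sigma]
  have R : (∑ C ∈ I.powerset.filter Finset.Nonempty, ∑ σ : Finpartition (I \ C),
        F (glue I C σ) C)
      = ∑ y ∈ (I.powerset.filter Finset.Nonempty).sigma
          (fun C => (univ : Finset (Finpartition (I \ C)))), F (glue I y.1 y.2) y.1 := by
    rw [Finset.sum_sigma]
  rw [L, R]
  refine Finset.sum_bij' (fun x hx => ⟨x.2, x.1.avoid x.2⟩)
    (fun y hy => ⟨glue I y.1 y.2, y.1⟩) ?_ ?_ ?_ ?_ ?_
  · rintro ⟨π, C⟩ hx
    simp only [mem_sigma, mem_univ, true_and] at hx ⊢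
    simp only [mem_filter, mem_powerset]
    exact ⟨⟨π.le hx, π.nonempty_of_mem_parts hx⟩, trivial⟩
  · rintro ⟨C, σ⟩ hy
    simp only [mem_sigma, mem_univ, mem_filter, mem_powerset, and_true, true_and] at hy ⊢
    rw [glue_parts σ hy.2 hy.1]
    exact mem_insert_self _ _
  · rintro ⟨π, C⟩ hx
    simp only [mem_sigma, mem_univ, true_and] at hx
    have h1 : C.Nonempty := π.nonempty_of_mem_parts hx
    have h2 : C ⊆ I := π.le hx
    have : glue I C (π.avoid C) = π := by
      rw [glue, dif_pos ⟨h1, h2⟩]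
      exact extend_avoid π hx _ _ _
    simp [this]
  · rintro ⟨C, σ⟩ hy
    simp only [mem_sigma, mem_univ, mem_filter, mem_powerset, and_true] at hy
    have : (glue I C σ).avoid C = σ := by
      rw [glue, dif_pos ⟨hy.2, hy.1⟩]
      exact avoid_extend σ hy.2 _ _ _
    simp [this]
  · rintro ⟨π, C⟩ hx
    simp only [mem_sigma, mem_univ, true_and] at hx
    have h1 : C.Nonempty := π.nonempty_of_mem_parts hx
    have h2 : C ⊆ I := π.le hx
    have : glue I C (π.avoid C) = π := by
      rw [glue, dif_pos ⟨h1, h2⟩]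
      exact extend_avoid π hx _ _ _
    simp [this]


noncomputable def cum (ν : Finset ι → ℂ) (I : Finset ι) : ℂ :=
  ∑ π : Finpartition I,
    (-1 : ℂ) ^ (π.parts.card - 1) * (Nat.factorial (π.parts.card - 1) : ℂ) *
      ∏ B ∈ π.parts, ν B

noncomputable def SSum (c : Finset ι → ℂ) (I : Finset ι) : ℂ :=
  ∑ π : Finpartition I, ∏ B ∈ π.parts, c B

lemma SSum_empty (c : Finset ι → ℂ) : SSum c (∅ : Finset ι) = 1 := by
  have h : ∀ π : Finpartition (∅ : Finset ι), π.parts = ∅ := fun π =>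
    Finpartition.parts_eq_empty_iff.mpr rfl
  have hcard : Fintype.card (Finpartition (∅ : Finset ι)) = 1 := by
    rw [Fintype.card_eq_one_iff]
    refine ⟨Finpartition.empty _, fun π => ?_⟩
    ext1
    rw [h π]; rfl
  rw [SSum]
  have : ∀ π : Finpartition (∅ : Finset ι), (∏ B ∈ π.parts, c B) = 1 := fun π => by
    rw [h π]; simp
  rw [Fintype.sum_congr _ _ this]
  simp [hcard]

lemma parts_card_one {I : Finset ι} (π : Finpartition I) (h : π.parts.card = 1) :
    π.parts = {I} := by
  obtain ⟨B, hB⟩ := card_eq_one.mp h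
  have hBI : B = I := by
    have h2 := π.sup_parts
    rw [hB] at h2
    simpa using h2
  rw [hB, hBI]

lemma filter_mem_card {I : Finset ι} {a : ι} (π : Finpartition I) (ha : a ∈ I) :
    (π.parts.filter (fun C => a ∈ C)).card = 1 := by
  rw [card_eq_one]
  obtain ⟨B, hB, hu⟩ := π.existsUnique_mem ha
  refine ⟨B, ?_⟩
  ext C
  simp only [mem_filter, mem_singleton]
  constructor
  · rintro ⟨h1, h2⟩; exact hu C ⟨h1, h2⟩
  · rintro rfl; exact hB

lemma glue_prod {I C : Finset ι} (σ : Finpartition (I \ C)) (h1 : C.Nonempty) (h2 : C ⊆ I)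
    (c : Finset ι → ℂ) :
    (∏ B ∈ (glue I C σ).parts, c B) = c C * ∏ B ∈ σ.parts, c B := by
  rw [glue_parts σ h1 h2, prod_insert (not_mem_parts_self σ h1)]

lemma glue_card {I C : Finset ι} (σ : Finpartition (I \ C)) (h1 : C.Nonempty) (h2 : C ⊆ I) :
    (glue I C σ).parts.card = σ.parts.card + 1 := by
  rw [glue_parts σ h1 h2, card_insert_of_notMem (not_mem_parts_self σ h1)]

lemma grouping (c : Finset ι → ℂ) {I : Finset ι} {a : ι} (ha : a ∈ I) :
    SSum c I = ∑ S ∈ I.powerset.filter (fun S => a ∈ S), c S * SSum c (I \ S) := by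
  have h1 : ∀ π : Finpartition I,
      (∏ B ∈ π.parts, c B) = ∑ C ∈ π.parts, if a ∈ C then ∏ B ∈ π.parts, c B else 0 := by
    intro π
    obtain ⟨B, hB, hu⟩ := π.existsUnique_mem ha
    rw [Finset.sum_eq_single_of_mem B hB.1]
    · rw [if_pos hB.2]
    · intro C hC hne
      rw [if_neg (fun haC => hne (hu C ⟨hC, haC⟩))]
  rw [SSum, Fintype.sum_congr _ _ h1, split]
  have h2 : ∀ C ∈ I.powerset.filter Finset.Nonempty,
      (∑ σ : Finpartition (I \ C), if a ∈ C then ∏ B ∈ (glue I C σ).parts, c B else 0)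
      = if a ∈ C then c C * SSum c (I \ C) else 0 := by
    intro C hC
    rw [mem_filter, mem_powerset] at hC
    by_cases haC : a ∈ C
    · simp only [if_pos haC]
      rw [SSum, Finset.mul_sum]
      exact Fintype.sum_congr _ _ (fun σ => glue_prod σ hC.2 hC.1 c)
    · simp [haC]
  rw [Finset.sum_congr rfl h2]
  rw [Finset.sum_filter, Finset.sum_filter]
  refine Finset.sum_congr rfl (fun C hC => ?_)
  by_cases haC : a ∈ C
  · simp [haC, show C.Nonempty from ⟨a, haC⟩]
  · by_cases hne : C.Nonempty <;> simp [haC, hne]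

lemma key_coeff (c : ℕ) (hc : 1 ≤ c) :
    (-1:ℂ)^(c-1) * ((c-1).factorial : ℂ)
      + ((c - 1 : ℕ) : ℂ) * ((-1:ℂ)^(c-2) * ((c-2).factorial : ℂ))
    = if c = 1 then 1 else 0 := by
  match c, hc with
  | 1, _ => simp
  | (k+2), _ =>
    rw [if_neg (by omega)]
    have e1 : k+2-1 = k+1 := rfl
    have e2 : k+2-2 = k := rfl
    rw [e1, e2, pow_succ, Nat.factorial_succ]
    push_cast
    ring

lemma sum_indicator_one (ν : Finset ι → ℂ) {I : Finset ι} (hI : I.Nonempty) :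
    (∑ π : Finpartition I, (if π.parts.card = 1 then (1:ℂ) else 0) * ∏ B ∈ π.parts, ν B)
    = ν I := by
  have hne : I ≠ ⊥ := by
    rw [Finset.bot_eq_empty]; exact hI.ne_empty
  rw [Fintype.sum_eq_single (Finpartition.indiscrete hne)]
  · simp [Finpartition.indiscrete_parts]
  · intro π hπ
    rw [if_neg, zero_mul]
    intro hcard
    apply hπ
    ext1
    rw [parts_card_one π hcard, Finpartition.indiscrete_parts]

lemma rec_cum (ν : Finset ι → ℂ) {I : Finset ι} {a : ι} (ha : a ∈ I) :
    ν I = cum ν I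
      + ∑ S ∈ I.powerset.filter (fun S => a ∈ S ∧ S ≠ I), cum ν S * ν (I \ S) := by
  classical
  set F : Finpartition I → Finset ι → ℂ := fun π C =>
    if a ∈ C then 0 else
      (-1:ℂ)^(π.parts.card - 2) * ((π.parts.card - 2).factorial : ℂ) * ∏ B ∈ π.parts, ν B
    with hF
  have lhs : (∑ π : Finpartition I, ∑ C ∈ π.parts, F π C)
      = ∑ π : Finpartition I, ((π.parts.card - 1 : ℕ) : ℂ) *
          ((-1:ℂ)^(π.parts.card - 2) * ((π.parts.card - 2).factorial : ℂ)
            * ∏ B ∈ π.parts, ν B) := by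
    refine Fintype.sum_congr _ _ (fun π => ?_)
    rw [hF]
    rw [Finset.sum_ite, Finset.sum_const_zero, Finset.sum_const, zero_add, nsmul_eq_mul]
    congr 2
    have h1 := Finset.card_filter_add_card_filter_not (s := π.parts)
      (p := fun C => a ∈ C)
    have h2 := filter_mem_card π ha
    omega
  have rhs : (∑ C ∈ I.powerset.filter Finset.Nonempty,
        ∑ σ : Finpartition (I \ C), F (glue I C σ) C)
      = ∑ S ∈ I.powerset.filter (fun S => a ∈ S ∧ S ≠ I), cum ν S * ν (I \ S) := by
    have h3 : ∀ C ∈ I.powerset.filter Finset.Nonempty,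
        (∑ σ : Finpartition (I \ C), F (glue I C σ) C)
        = if a ∈ C then 0 else cum ν (I \ C) * ν C := by
      intro C hC
      rw [mem_filter, mem_powerset] at hC
      by_cases haC : a ∈ C
      · simp [hF, haC]
      · rw [if_neg haC]
        rw [cum, Finset.sum_mul]
        refine Fintype.sum_congr _ _ (fun σ => ?_)
        rw [hF]
        simp only [if_neg haC]
        rw [glue_prod σ hC.2 hC.1, glue_card σ hC.2 hC.1]
        have e : σ.parts.card + 1 - 2 = σ.parts.card - 1 := by omega
        rw [e]
        ring
    rw [Finset.sum_congr rfl h3]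
    have h4 : (∑ C ∈ I.powerset.filter Finset.Nonempty,
          if a ∈ C then 0 else cum ν (I \ C) * ν C)
        = ∑ C ∈ I.powerset.filter (fun C => C.Nonempty ∧ a ∉ C), cum ν (I \ C) * ν C := by
      rw [Finset.sum_filter, Finset.sum_filter]
      refine Finset.sum_congr rfl (fun C hC => ?_)
      by_cases hne : C.Nonempty
      · by_cases haC : a ∈ C <;> simp [hne, haC]
      · simp [hne]
    rw [h4]
    refine Finset.sum_nbij' (fun C => I \ C) (fun S => I \ S) ?_ ?_ ?_ ?_ ?_
    · intro C hC
      rw [mem_filter, mem_powerset] at hC ⊢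
      refine ⟨sdiff_subset, mem_sdiff.mpr ⟨ha, hC.2.2⟩, ?_⟩
      intro hEq
      obtain ⟨x, hx⟩ := hC.2.1
      have hx2 : x ∈ I \ C := by
        show x ∈ I \ C
        rw [hEq]; exact hC.1 hx
      exact (mem_sdiff.mp hx2).2 hx
    · intro S hS
      rw [mem_filter, mem_powerset] at hS ⊢
      refine ⟨sdiff_subset, ?_, fun h => (mem_sdiff.mp h).2 hS.2.1⟩
      rw [Finset.sdiff_nonempty]
      intro hsub
      exact hS.2.2 (Finset.Subset.antisymm hS.1 hsub)
    · intro C hC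
      rw [mem_filter, mem_powerset] at hC
      exact Finset.sdiff_sdiff_eq_self hC.1
    · intro S hS
      rw [mem_filter, mem_powerset] at hS
      exact Finset.sdiff_sdiff_eq_self hS.1
    · intro C hC
      rw [mem_filter, mem_powerset] at hC
      rw [Finset.sdiff_sdiff_eq_self hC.1]
  have hsplit := split (I := I) F
  rw [lhs, rhs] at hsplit
  rw [← hsplit]
  rw [cum, ← Finset.sum_add_distrib]
  rw [← sum_indicator_one ν ⟨a, ha⟩]
  refine Fintype.sum_congr _ _ (fun π => ?_)
  have hc : 1 ≤ π.parts.card := by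
    rw [Nat.one_le_iff_ne_zero, ← Nat.pos_iff_ne_zero, Finset.card_pos]
    exact π.parts_nonempty (by rw [Finset.bot_eq_empty]; exact (Finset.nonempty_iff_ne_empty.mp ⟨a, ha⟩))
  have hkey := key_coeff π.parts.card hc
  rw [← hkey]
  ring

lemma inv_ssum (ν : Finset ι → ℂ) (I : Finset ι) (hI : I.Nonempty) :
    SSum (cum ν) I = ν I := by
  induction I using Finset.strongInduction with
  | _ I IH =>
    obtain ⟨a, ha⟩ := hI
    rw [grouping (cum ν) ha]
    have hImem : I ∈ I.powerset.filter (fun S => a ∈ S) := by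
      rw [mem_filter, mem_powerset]; exact ⟨Finset.Subset.refl I, ha⟩
    rw [← Finset.add_sum_erase _ _ hImem, Finset.sdiff_self, SSum_empty, mul_one]
    have hset : (I.powerset.filter (fun S => a ∈ S)).erase I
        = I.powerset.filter (fun S => a ∈ S ∧ S ≠ I) := by
      ext S
      simp only [mem_erase, mem_filter, mem_powerset]
      tauto
    rw [hset]
    have hcong : ∀ S ∈ I.powerset.filter (fun S => a ∈ S ∧ S ≠ I),
        cum ν S * SSum (cum ν) (I \ S) = cum ν S * ν (I \ S) := by
      intro S hS
      rw [mem_filter, mem_powerset] at hS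
      have hssub : I \ S ⊂ I := by
        refine Finset.sdiff_ssubset hS.1 ⟨a, hS.2.1⟩
      have hne : (I \ S).Nonempty := by
        rw [Finset.sdiff_nonempty]
        intro hsub
        exact hS.2.2 (Finset.Subset.antisymm hS.1 hsub)
      rw [IH _ hssub hne]
    rw [Finset.sum_congr rfl hcong]
    exact (rec_cum ν ha).symm

lemma rec2 (ν : Finset ι → ℂ) (hν0 : ν ∅ = 1) {I : Finset ι} {a : ι} (ha : a ∈ I) :
    ν I = ∑ S ∈ I.powerset.filter (fun S => a ∈ S), cum ν S * ν (I \ S) := by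
  rw [← inv_ssum ν I ⟨a, ha⟩, grouping (cum ν) ha]
  refine Finset.sum_congr rfl (fun S hS => ?_)
  rw [mem_filter, mem_powerset] at hS
  by_cases hSI : S = I
  · subst hSI
    rw [Finset.sdiff_self]
    show _ * SSum (cum ν) ∅ = _ * ν ∅
    rw [SSum_empty, hν0]
  · have hne : (I \ S).Nonempty := by
      rw [Finset.sdiff_nonempty]
      intro hsub
      exact hSI (Finset.Subset.antisymm hS.1 hsub)
    rw [inv_ssum ν _ hne]

lemma pair_reindex (I : Finset ι) (a : ι) (f : Finset ι → Finset ι → ℂ) :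
    (∑ S ∈ I.powerset.filter (fun S => a ∈ S), ∑ T ∈ (I \ S).powerset, f S T)
    = ∑ U ∈ I.powerset.filter (fun U => a ∈ U),
        ∑ S ∈ U.powerset.filter (fun S => a ∈ S), f S (U \ S) := by
  rw [← Finset.sum_sigma (I.powerset.filter (fun S => a ∈ S)) (fun S => (I \ S).powerset)
        (fun x => f x.1 x.2),
      ← Finset.sum_sigma (I.powerset.filter (fun U => a ∈ U))
        (fun U => U.powerset.filter (fun S => a ∈ S)) (fun x => f x.2 (x.1 \ x.2))]
  refine Finset.sum_bij' (fun x _ => (⟨x.1 ∪ x.2, x.1⟩ : Σ _ : Finset ι, Finset ι))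
    (fun y _ => (⟨y.2, y.1 \ y.2⟩ : Σ _ : Finset ι, Finset ι)) ?_ ?_ ?_ ?_ ?_
  · rintro ⟨S, T⟩ hx
    rw [mem_sigma, mem_filter, mem_powerset, mem_powerset] at hx
    rw [mem_sigma, mem_filter, mem_powerset, mem_filter, mem_powerset]
    exact ⟨⟨Finset.union_subset hx.1.1 (hx.2.trans sdiff_subset),
      mem_union_left _ hx.1.2⟩, subset_union_left, hx.1.2⟩
  · rintro ⟨U, S⟩ hy
    rw [mem_sigma, mem_filter, mem_powerset, mem_filter, mem_powerset] at hy
    rw [mem_sigma, mem_filter, mem_powerset, mem_powerset]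
    exact ⟨⟨hy.2.1.trans hy.1.1, hy.2.2⟩, Finset.sdiff_subset_sdiff hy.1.1 (Finset.Subset.refl S)⟩
  · rintro ⟨S, T⟩ hx
    rw [mem_sigma, mem_filter, mem_powerset, mem_powerset] at hx
    have hd : Disjoint S T := (Finset.disjoint_sdiff : Disjoint S (I \ S)).mono_right hx.2
    have : (S ∪ T) \ S = T := Finset.union_sdiff_cancel_left hd
    simp [this]
  · rintro ⟨U, S⟩ hy
    rw [mem_sigma, mem_filter, mem_powerset, mem_filter, mem_powerset] at hy
    have : S ∪ U \ S = U := Finset.union_sdiff_of_subset hy.2.1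
    simp [this]
  · rintro ⟨S, T⟩ hx
    rw [mem_sigma, mem_filter, mem_powerset, mem_powerset] at hx
    have hd : Disjoint S T := (Finset.disjoint_sdiff : Disjoint S (I \ S)).mono_right hx.2
    have : (S ∪ T) \ S = T := Finset.union_sdiff_cancel_left hd
    simp [this]

section Model
variable [Fintype ι]

lemma moment_expand (t : Finset ι → ℂ) (a0 a1 : ι → ℂ) (μ μt : Finset ι → ℂ)
    (hμ : ∀ I : Finset ι,
      μ I = ∑ J : Finset ι, t J * ∏ i ∈ I, (if i ∈ J then a1 i else a0 i))
    (hμt : ∀ I : Finset ι, μt I = ∑ J ∈ univ.filter (fun J => I ⊆ J), t J)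
    (J : Finset ι) :
    μ J = ∑ T ∈ J.powerset, μt T * ((∏ i ∈ T, (a1 i - a0 i)) * ∏ i ∈ J \ T, a0 i) := by
  rw [hμ]
  have hexp : ∀ K : Finset ι, (∏ i ∈ J, (if i ∈ K then a1 i else a0 i))
      = ∑ T ∈ J.powerset, (∏ i ∈ T, (if i ∈ K then a1 i - a0 i else 0)) * ∏ i ∈ J \ T, a0 i := by
    intro K
    rw [← Finset.prod_add]
    refine Finset.prod_congr rfl (fun i _ => ?_)
    by_cases h : i ∈ K <;> simp [h]
  have hTK : ∀ (T K : Finset ι), (∏ i ∈ T, (if i ∈ K then a1 i - a0 i else 0))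
      = if T ⊆ K then ∏ i ∈ T, (a1 i - a0 i) else 0 := by
    intro T K
    by_cases h : T ⊆ K
    · rw [if_pos h]; exact Finset.prod_congr rfl (fun i hi => if_pos (h hi))
    · rw [if_neg h]
      obtain ⟨i, hiT, hiK⟩ := Finset.not_subset.mp h
      exact Finset.prod_eq_zero hiT (if_neg hiK)
  simp_rw [hexp, hTK, Finset.mul_sum]
  rw [Finset.sum_comm]
  refine Finset.sum_congr rfl (fun T _ => ?_)
  rw [hμt, Finset.sum_filter, Finset.sum_mul]
  refine Finset.sum_congr rfl (fun K _ => ?_)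
  by_cases h : T ⊆ K <;> simp [h]

noncomputable def cand (μt : Finset ι → ℂ) (a0 a1 : ι → ℂ) (S : Finset ι) : ℂ :=
  cum μt S * ∏ i ∈ S, (a1 i - a0 i) + (if S.card = 1 then ∑ i ∈ S, a0 i else 0)

lemma cand_recursion (t : Finset ι → ℂ) (ht : ∑ J : Finset ι, t J = 1)
    (a0 a1 : ι → ℂ) (μ μt : Finset ι → ℂ)
    (hμ : ∀ I : Finset ι,
      μ I = ∑ J : Finset ι, t J * ∏ i ∈ I, (if i ∈ J then a1 i else a0 i))
    (hμt : ∀ I : Finset ι, μt I = ∑ J ∈ univ.filter (fun J => I ⊆ J), t J)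
    {I : Finset ι} {a : ι} (ha : a ∈ I) :
    μ I = ∑ S ∈ I.powerset.filter (fun S => a ∈ S), cand μt a0 a1 S * μ (I \ S) := by
  have hμt0 : μt ∅ = 1 := by
    rw [hμt]
    simpa using ht
  have hL1 := moment_expand t a0 a1 μ μt hμ hμt
  -- split candidate sum in two
  have hsplit : ∑ S ∈ I.powerset.filter (fun S => a ∈ S), cand μt a0 a1 S * μ (I \ S)
      = (∑ S ∈ I.powerset.filter (fun S => a ∈ S),
          (cum μt S * ∏ i ∈ S, (a1 i - a0 i)) * μ (I \ S))
        + ∑ S ∈ I.powerset.filter (fun S => a ∈ S),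
            (if S.card = 1 then ∑ i ∈ S, a0 i else 0) * μ (I \ S) := by
    rw [← Finset.sum_add_distrib]
    refine Finset.sum_congr rfl (fun S _ => ?_)
    rw [cand]; ring
  -- second piece
  have hsec : (∑ S ∈ I.powerset.filter (fun S => a ∈ S),
        (if S.card = 1 then ∑ i ∈ S, a0 i else 0) * μ (I \ S))
      = a0 a * μ (I \ {a}) := by
    rw [Finset.sum_eq_single_of_mem ({a} : Finset ι)
      (by rw [mem_filter, mem_powerset]; exact ⟨Finset.singleton_subset_iff.mpr ha,
        Finset.mem_singleton_self a⟩)]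
    · simp
    · intro S hS hne
      rw [mem_filter, mem_powerset] at hS
      by_cases h1 : S.card = 1
      · obtain ⟨x, rfl⟩ := Finset.card_eq_one.mp h1
        have : a = x := Finset.mem_singleton.mp hS.2
        exact absurd (by rw [this]) hne
      · rw [if_neg h1, zero_mul]
  -- first piece
  have hfir : (∑ S ∈ I.powerset.filter (fun S => a ∈ S),
        (cum μt S * ∏ i ∈ S, (a1 i - a0 i)) * μ (I \ S))
      = ∑ U ∈ I.powerset.filter (fun U => a ∈ U),
          μt U * ((∏ i ∈ U, (a1 i - a0 i)) * ∏ i ∈ I \ U, a0 i) := by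
    have e1 : ∀ S ∈ I.powerset.filter (fun S => a ∈ S),
        (cum μt S * ∏ i ∈ S, (a1 i - a0 i)) * μ (I \ S)
        = ∑ T ∈ (I \ S).powerset,
            (cum μt S * ∏ i ∈ S, (a1 i - a0 i)) *
              (μt T * ((∏ i ∈ T, (a1 i - a0 i)) * ∏ i ∈ (I \ S) \ T, a0 i)) := by
      intro S _
      rw [hL1 (I \ S), Finset.mul_sum]
    rw [Finset.sum_congr rfl e1]
    rw [pair_reindex I a (fun S T =>
      (cum μt S * ∏ i ∈ S, (a1 i - a0 i)) *
        (μt T * ((∏ i ∈ T, (a1 i - a0 i)) * ∏ i ∈ (I \ S) \ T, a0 i)))]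
    refine Finset.sum_congr rfl (fun U hU => ?_)
    rw [mem_filter, mem_powerset] at hU
    have e2 : ∀ S ∈ U.powerset.filter (fun S => a ∈ S),
        (cum μt S * ∏ i ∈ S, (a1 i - a0 i)) *
          (μt (U \ S) * ((∏ i ∈ U \ S, (a1 i - a0 i)) * ∏ i ∈ (I \ S) \ (U \ S), a0 i))
        = (cum μt S * μt (U \ S)) * ((∏ i ∈ U, (a1 i - a0 i)) * ∏ i ∈ I \ U, a0 i) := by
      intro S hS
      rw [mem_filter, mem_powerset] at hS
      have hb : (∏ i ∈ U \ S, (a1 i - a0 i)) * ∏ i ∈ S, (a1 i - a0 i)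
          = ∏ i ∈ U, (a1 i - a0 i) := Finset.prod_sdiff hS.1
      have hst : (I \ S) \ (U \ S) = I \ U := by
        ext x
        simp only [mem_sdiff]
        constructor
        · rintro ⟨⟨hxI, hxS⟩, h2⟩
          exact ⟨hxI, fun hxU => h2 ⟨hxU, hxS⟩⟩
        · rintro ⟨hxI, hxU⟩
          exact ⟨⟨hxI, fun hxS => hxU (hS.1 hxS)⟩, fun h => hxU h.1⟩
      rw [hst, ← hb]
      ring
    rw [Finset.sum_congr rfl e2, ← Finset.sum_mul, ← rec2 μt hμt0 hU.2]
  rw [hsplit, hsec, hfir]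
  -- second piece as a sum over subsets not containing a
  have hsec2 : a0 a * μ (I \ {a})
      = ∑ U ∈ I.powerset.filter (fun U => ¬ a ∈ U),
          μt U * ((∏ i ∈ U, (a1 i - a0 i)) * ∏ i ∈ I \ U, a0 i) := by
    have hpow : I.powerset.filter (fun U => ¬ a ∈ U) = (I \ {a}).powerset := by
      ext T
      simp only [mem_filter, mem_powerset, Finset.subset_sdiff,
        Finset.disjoint_singleton_right]
    rw [hpow, hL1 (I \ {a}), Finset.mul_sum]
    refine Finset.sum_congr rfl (fun T hT => ?_)
    rw [mem_powerset] at hT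
    have haT : a ∉ T := fun h => (Finset.mem_sdiff.mp (hT h)).2 (Finset.mem_singleton_self a)
    have haIT : a ∈ I \ T := Finset.mem_sdiff.mpr ⟨ha, haT⟩
    have hset : (I \ {a}) \ T = (I \ T).erase a := by
      ext x
      simp only [mem_sdiff, mem_erase, Finset.mem_singleton]
      tauto
    rw [hset, ← Finset.mul_prod_erase (I \ T) a0 haIT]
    ring
  rw [hsec2, Finset.sum_filter_add_sum_filter_not]
  exact hL1 I

lemma cand_ssum (t : Finset ι → ℂ) (ht : ∑ J : Finset ι, t J = 1)
    (a0 a1 : ι → ℂ) (μ μt : Finset ι → ℂ)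
    (hμ : ∀ I : Finset ι,
      μ I = ∑ J : Finset ι, t J * ∏ i ∈ I, (if i ∈ J then a1 i else a0 i))
    (hμt : ∀ I : Finset ι, μt I = ∑ J ∈ univ.filter (fun J => I ⊆ J), t J)
    (I : Finset ι) (hI : I.Nonempty) :
    SSum (cand μt a0 a1) I = μ I := by
  have hμ0 : μ ∅ = 1 := by
    rw [hμ]
    simpa using ht
  induction I using Finset.strongInduction with
  | _ I IH =>
    obtain ⟨a, ha⟩ := hI
    rw [grouping (cand μt a0 a1) ha]
    rw [cand_recursion t ht a0 a1 μ μt hμ hμt ha]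
    refine Finset.sum_congr rfl (fun S hS => ?_)
    rw [mem_filter, mem_powerset] at hS
    by_cases hSI : S = I
    · subst hSI
      rw [Finset.sdiff_self]
      show _ * SSum (cand μt a0 a1) ∅ = _ * μ ∅
      rw [SSum_empty, hμ0]
    · have hssub : I \ S ⊂ I := Finset.sdiff_ssubset hS.1 ⟨a, hS.2⟩
      have hne : (I \ S).Nonempty := by
        rw [Finset.sdiff_nonempty]
        intro hsub
        exact hSI (Finset.Subset.antisymm hS.1 hsub)
      rw [IH _ hssub hne]

lemma cum_eq_cand (t : Finset ι → ℂ) (ht : ∑ J : Finset ι, t J = 1)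
    (a0 a1 : ι → ℂ) (μ μt : Finset ι → ℂ)
    (hμ : ∀ I : Finset ι,
      μ I = ∑ J : Finset ι, t J * ∏ i ∈ I, (if i ∈ J then a1 i else a0 i))
    (hμt : ∀ I : Finset ι, μt I = ∑ J ∈ univ.filter (fun J => I ⊆ J), t J)
    (I : Finset ι) (hI : I.Nonempty) :
    cum μ I = cand μt a0 a1 I := by
  have hμ0 : μ ∅ = 1 := by
    rw [hμ]
    simpa using ht
  induction I using Finset.strongInduction with
  | _ I IH =>
    obtain ⟨a, ha⟩ := hI
    have h1 := rec2 μ hμ0 ha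
    have h2 := cand_recursion t ht a0 a1 μ μt hμ hμt ha
    rw [h1] at h2
    have hImem : I ∈ I.powerset.filter (fun S => a ∈ S) := by
      rw [mem_filter, mem_powerset]; exact ⟨Finset.Subset.refl I, ha⟩
    rw [← Finset.add_sum_erase _ _ hImem, ← Finset.add_sum_erase _ (fun S => cand μt a0 a1 S * μ (I \ S)) hImem] at h2
    have hrest : ∀ S ∈ (I.powerset.filter (fun S => a ∈ S)).erase I,
        cum μ S * μ (I \ S) = cand μt a0 a1 S * μ (I \ S) := by
      intro S hS
      rw [mem_erase, mem_filter, mem_powerset] at hS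
      have : cum μ S = cand μt a0 a1 S :=
        IH S (Finset.ssubset_iff_subset_ne.mpr ⟨hS.2.1, hS.1⟩) ⟨a, hS.2.2⟩
      rw [this]
    rw [Finset.sum_congr rfl hrest] at h2
    have h5 := add_right_cancel h2
    rw [Finset.sdiff_self, hμ0, mul_one, mul_one] at h5
    exact h5


end Model
end HiddenSubsetAux

open HiddenSubsetAux in
/-- for the complete hidden subset model with mixing table `t` and
parameters `a⁰, a¹`, the cumulants satisfy `k_i = a_i⁰ + b_i·k^{(t)}_i` and
`k_I = k^{(t)}_I·∏_{i∈I} b_i` for `|I| ≥ 2`, where `b_i = a_i¹ − a_i⁰`. -/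
theorem hidden_subset_model_cumulants {n : ℕ} (hn : 1 ≤ n)
    (t : Finset (Fin n) → ℂ) (ht : ∑ J : Finset (Fin n), t J = 1)
    (a0 a1 : Fin n → ℂ)
    (μ μt : Finset (Fin n) → ℂ)
    (hμ : ∀ I : Finset (Fin n),
      μ I = ∑ J : Finset (Fin n), t J * ∏ i ∈ I, (if i ∈ J then a1 i else a0 i))
    (hμt : ∀ I : Finset (Fin n), μt I = ∑ J ∈ univ.filter (fun J => I ⊆ J), t J) :
    (∀ i : Fin n, cumulant μ {i} = a0 i + (a1 i - a0 i) * cumulant μt {i}) ∧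
    (∀ I : Finset (Fin n), 2 ≤ I.card →
      cumulant μ I = cumulant μt I * ∏ i ∈ I, (a1 i - a0 i)) := by
  have hbr : ∀ (ν : Finset (Fin n) → ℂ) (I : Finset (Fin n)), cumulant ν I = cum ν I :=
    fun ν I => rfl
  have key := cum_eq_cand t ht a0 a1 μ μt hμ hμt
  constructor
  · intro i
    have h := key {i} (Finset.singleton_nonempty i)
    rw [hbr, hbr, h, cand]
    simp
    ring
  · intro I hI
    have h := key I (Finset.card_pos.mp (by omega))
    have hc1 : I.card ≠ 1 := by omega
    rw [hbr, hbr, h, cand, if_neg hc1, add_zero]
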